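/- Let X be an essentially bounded random variable on a probability space (Ω, 𝓕, P). Then U_λ(X) converges to E[X] as λ → 0 from the right; that is, lim_{λ↓0} −(1/λ)·log E[exp(−λX)] = E[X]. -/

import Mathlib

open MeasureTheory ENNReal Real Filter Set

noncomputable section

variable {Ω : Type*}

/-- For essentially bounded `X`,
`U_λ(X) = -(1/λ) log E[exp(-λX)] → E[X]` as `λ ↓ 0`. -/
theorem stmt_4 {mΩ : MeasurableSpace Ω} (P : Measure Ω) [IsProbabilityMeasure P]
    (X : Ω → ℝ) (hXmeas : AEStronglyMeasurable X P) (hXbdd : ∃ C : ℝ, ∀ᵐ ω ∂P, |X ω| ≤ C) :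
    Tendsto (fun l : ℝ => -(1 / l) * Real.log (∫ ω, Real.exp (-l * X ω) ∂P))
      (nhdsWithin 0 (Set.Ioi 0)) (nhds (∫ ω, X ω ∂P)) := by
  obtain ⟨C, hC⟩ := hXbdd
  have hXint : Integrable X P :=
    (integrable_const C).mono' hXmeas (hC.mono fun ω h => by simpa using h)
  set g : ℝ → ℝ := fun l => ∫ ω, Real.exp (-l * X ω) ∂P with hg
  -- derivative of g at 0
  have hderiv : HasDerivAt g (∫ ω, (-X ω) ∂P) 0 := by
    have := hasDerivAt_integral_of_dominated_loc_of_deriv_le (μ := P) (x₀ := (0:ℝ))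
      (F := fun l ω => Real.exp (-l * X ω)) (F' := fun l ω => -X ω * Real.exp (-l * X ω))
      (bound := fun ω => C * Real.exp C) (s := Metric.ball (0:ℝ) 1) (Metric.ball_mem_nhds (0:ℝ) one_pos)
      (Filter.Eventually.of_forall fun l =>
        (Real.continuous_exp.comp_aestronglyMeasurable (hXmeas.const_mul (-l))))
      (by simpa using (integrable_const (1:ℝ)))
      (by
        have : AEStronglyMeasurable (fun ω => -X ω * Real.exp (-(0:ℝ) * X ω)) P :=
          (hXmeas.neg).mul (Real.continuous_exp.comp_aestronglyMeasurable
            (hXmeas.const_mul (-(0:ℝ))))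
        exact this)
      (hC.mono fun ω hω l hl => by
        have hC0 : 0 ≤ C := (abs_nonneg _).trans hω
        have hl1 : |l| ≤ 1 := le_of_lt (by simpa [Real.dist_eq] using hl)
        have h1 : |(-X ω)| * Real.exp (-l * X ω) ≤ C * Real.exp C := by
          apply mul_le_mul (by simpa using hω) ?_ (Real.exp_nonneg _) hC0
          apply Real.exp_le_exp.2
          calc -l * X ω ≤ |(-l) * X ω| := le_abs_self _
            _ = |l| * |X ω| := by rw [abs_mul, abs_neg]
            _ ≤ 1 * C := mul_le_mul hl1 hω (abs_nonneg _) zero_le_one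
            _ = C := one_mul C
        simpa [norm_mul, abs_mul, Real.abs_exp] using h1)
      (by
        have : Integrable (fun _ : Ω => C * Real.exp C) P := integrable_const _
        exact this)
      (Filter.Eventually.of_forall fun ω l _ => by
        have h := (hasDerivAt_id l).neg.mul_const (X ω)
        have h2 := h.exp
        simpa [mul_comm] using h2)
    have h := this.2
    simp only [neg_zero, zero_mul, Real.exp_zero, mul_one] at h
    exact h
  have hg0 : g 0 = 1 := by simp [hg]
  have hIX : ∫ ω, (-X ω) ∂P = -∫ ω, X ω ∂P := integral_neg X
  -- derivative of log ∘ g at 0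
  have hlog : HasDerivAt (fun l => Real.log (g l)) (-∫ ω, X ω ∂P) 0 := by
    have := hderiv.log (by rw [hg0]; norm_num)
    rw [hg0, hIX] at this
    simpa using this
  have hslope := hasDerivAt_iff_tendsto_slope.1 hlog
  have hmono : (nhdsWithin (0:ℝ) (Set.Ioi 0)) ≤ nhdsWithin 0 {(0:ℝ)}ᶜ :=
    nhdsWithin_mono 0 (fun x hx => ne_of_gt hx)
  have h1 : Tendsto (fun l : ℝ => slope (fun l => Real.log (g l)) 0 l)
      (nhdsWithin 0 (Set.Ioi 0)) (nhds (-∫ ω, X ω ∂P)) := hslope.mono_left hmono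
  have h2 := h1.neg
  rw [neg_neg] at h2
  refine h2.congr' ?_
  filter_upwards [self_mem_nhdsWithin] with l hl
  have hl0 : l ≠ 0 := ne_of_gt hl
  have hgl : g l = ∫ ω, Real.exp (-l * X ω) ∂P := rfl
  rw [slope_def_field, hg0, Real.log_one, sub_zero, sub_zero, hgl]
  ring
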